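/- Let (L₀, L₁, L₂, L_∞) be a quadruple of pairwise transverse Lagrangians in a symplectic vector space V, and assume that the quadratic forms Q_{L₁}^{L₀,L_∞} (on L₀) and Q_{L₂}^{L₁,L_∞} (on L₁) are positive definite. Then as quadratic forms on L₀ one has 0 < Q_{L₁}^{L₀,L_∞} < Q_{L₂}^{L₀,L_∞}, i.e. Q_{L₂}^{L₀,L_∞} − Q_{L₁}^{L₀,L_∞} is positive definite. -/
import Mathlib


/-- A Lagrangian of a symplectic vector space `(V, ω)` of dimension `2n` is an
`n`-dimensional subspace on which `ω` vanishes. -/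
def IsLagrangian {V : Type*} [AddCommGroup V] [Module ℝ V]
    (ω : V →ₗ[ℝ] V →ₗ[ℝ] ℝ) (n : ℕ) (L : Submodule ℝ V) : Prop :=
  Module.finrank ℝ L = n ∧ ∀ x ∈ L, ∀ y ∈ L, ω x y = 0

/-- (Monotonicity.)  Let `(L₀, L₁, L₂, L_∞)` be a quadruple of pairwise
transverse Lagrangians, and assume the quadratic forms `Q_{L₁}^{L₀,L_∞}`
(on `L₀`) and `Q_{L₂}^{L₁,L_∞}` (on `L₁`) are positive definite.  Then, as
quadratic forms on `L₀`, `0 < Q_{L₁}^{L₀,L_∞} < Q_{L₂}^{L₀,L_∞}`: i.e.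
`Q_{L₁}^{L₀,L_∞}` and the difference `Q_{L₂}^{L₀,L_∞} − Q_{L₁}^{L₀,L_∞}` are
positive definite. -/
theorem stmt_12
    {V : Type*} [AddCommGroup V] [Module ℝ V] [FiniteDimensional ℝ V]
    (n : ℕ)
    (ω : V →ₗ[ℝ] V →ₗ[ℝ] ℝ)
    (halt : ∀ x : V, ω x x = 0)
    (hnd : ∀ x : V, x ≠ 0 → ∃ y : V, ω x y ≠ 0)
    (hdim : Module.finrank ℝ V = 2 * n)
    (L₀ L₁ L₂ Linf : Submodule ℝ V)
    (hL₀ : IsLagrangian ω n L₀) (hL₁ : IsLagrangian ω n L₁)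
    (hL₂ : IsLagrangian ω n L₂) (hLinf : IsLagrangian ω n Linf)
    (h01 : L₀ ⊓ L₁ = ⊥) (h02 : L₀ ⊓ L₂ = ⊥) (h0inf : L₀ ⊓ Linf = ⊥)
    (h12 : L₁ ⊓ L₂ = ⊥) (h1inf : L₁ ⊓ Linf = ⊥) (h2inf : L₂ ⊓ Linf = ⊥)
    (T₁ : ↥L₀ →ₗ[ℝ] ↥Linf)
    (hT₁ : ∀ x : V, x ∈ L₁ ↔ ∃ a : ↥L₀, x = ↑a + ↑(T₁ a))
    (T₂ : ↥L₀ →ₗ[ℝ] ↥Linf)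
    (hT₂ : ∀ x : V, x ∈ L₂ ↔ ∃ a : ↥L₀, x = ↑a + ↑(T₂ a))
    (S : ↥L₁ →ₗ[ℝ] ↥Linf)
    (hS : ∀ x : V, x ∈ L₂ ↔ ∃ b : ↥L₁, x = ↑b + ↑(S b))
    (hQ₁pos : ∀ a : ↥L₀, a ≠ 0 → 0 < ω ↑a ↑(T₁ a))
    (hSpos : ∀ b : ↥L₁, b ≠ 0 → 0 < ω ↑b ↑(S b)) :
    (∀ a : ↥L₀, a ≠ 0 → 0 < ω ↑a ↑(T₁ a)) ∧
    (∀ a : ↥L₀, a ≠ 0 → 0 < ω ↑a ↑(T₂ a) - ω ↑a ↑(T₁ a)) := by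
  refine ⟨hQ₁pos, ?_⟩
  intro a ha
  set b : ↥L₁ := ⟨(a : V) + (T₁ a : V), (hT₁ _).mpr ⟨a, rfl⟩⟩ with hbdef
  have hbcoe : (b : V) = (a : V) + (T₁ a : V) := rfl
  have hbne : b ≠ 0 := by
    intro h
    apply ha
    have h' : (a : V) + (T₁ a : V) = 0 := congrArg Subtype.val h
    have haL : (a : V) ∈ L₀ ⊓ Linf := by
      refine Submodule.mem_inf.mpr ⟨a.2, ?_⟩
      have hneg : (a : V) = -(T₁ a : V) := eq_neg_of_add_eq_zero_left h'
      rw [hneg]; exact neg_mem (T₁ a).2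
    rw [h0inf] at haL
    exact Subtype.ext ((Submodule.mem_bot ℝ).mp haL)
  have hmem : ((b : V) + (S b : V)) ∈ L₂ := (hS _).mpr ⟨b, rfl⟩
  obtain ⟨a', ha'⟩ := (hT₂ _).mp hmem
  rw [hbcoe] at ha'
  have hdiff : ((a : V) - (a' : V)) ∈ L₀ ⊓ Linf := by
    refine Submodule.mem_inf.mpr ⟨sub_mem a.2 a'.2, ?_⟩
    have key : (a : V) - (a' : V) = (T₂ a' : V) - (T₁ a : V) - (S b : V) := by
      rw [← sub_eq_zero] at ha' ⊢
      rw [← ha']; abel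
    rw [key]
    exact sub_mem (sub_mem (T₂ a').2 (T₁ a).2) (S b).2
  rw [h0inf] at hdiff
  have haa : a = a' := Subtype.ext (sub_eq_zero.mp ((Submodule.mem_bot ℝ).mp hdiff))
  subst haa
  have hT2 : (T₁ a : V) + (S b : V) = (T₂ a : V) := by
    rw [← sub_eq_zero] at ha' ⊢
    rw [← ha']; abel
  have hzero : ω (T₁ a : V) (S b : V) = 0 :=
    hLinf.2 _ (T₁ a).2 _ (S b).2
  have hpos := hSpos b hbne
  rw [hbcoe] at hpos
  simp only [map_add, LinearMap.add_apply, hzero] at hpos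
  rw [← hT2]
  simp only [map_add]
  linarith
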